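/- arXiv:0908.4407 — 2 statements merged into one kernel-verified Lean document; each statement's English description precedes it below -/
import Mathlib

section
/- If m and n are natural numbers at least one of which is equal to 0 or 1, then the disjunctive sum nim m + nim n is misère-indistinguishable from nim q, where q = m XOR n is the bitwise exclusive-or (Nim-sum) of m and n. -/
/-- An impartial game: a position is given by the list of its options
(the positions reachable in one move); both players have the same moves. -/
inductive Game : Type
  | node : List Game → Game

namespace Game

/-- The options of a position. -/
def options : Game → List Game
  | node l => l

/-- Disjunctive sum of two games: a move is made in exactly one component. -/
def add : Game → Game → Game
  | node l, node r =>
      node ((l.attach.map fun x => add x.1 (node r)) ++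
            (r.attach.map fun y => add (node l) y.1))
termination_by g h => sizeOf g + sizeOf h
decreasing_by
  · have := List.sizeOf_lt_of_mem x.2; simp_wf; (try simp only [Game.node.sizeOf_spec] at *); omega
  · have := List.sizeOf_lt_of_mem y.2; simp_wf; (try simp only [Game.node.sizeOf_spec] at *); omega

/-- Misère win (for the player to move): the game has no options,
or some option is a misère loss. -/
def MisereWin : Game → Prop
  | node l => l = [] ∨ ∃ x : {a // a ∈ l}, ¬ MisereWin x.1
decreasing_by
  simp_wf; have := List.sizeOf_lt_of_mem x.2; omega

/-- Misère indistinguishability: adding any game `T` yields the same misère outcome. -/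
def Indist (G H : Game) : Prop :=
  ∀ T : Game, MisereWin (add G T) ↔ MisereWin (add H T)

/-- The Nim-heap of size `n`, whose options are `nim 0, …, nim (n-1)`. -/
def nim : ℕ → Game
  | 0 => node []
  | n + 1 => node ((nim n).options ++ [nim n])

/-- Normal-play win (for the player to move): some option is a normal-play loss.
A player unable to move loses. -/
def NormalWin : Game → Prop
  | node l => ∃ x : {a // a ∈ l}, ¬ NormalWin x.1
decreasing_by
  simp_wf; have := List.sizeOf_lt_of_mem x.2; omega

/-- The Grundy value: the mex of the Grundy values of the options. -/
noncomputable def grundy : Game → ℕ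
  | node l => sInf {n : ℕ | ∀ x : {a // a ∈ l}, grundy x.1 ≠ n}
decreasing_by
  simp_wf; have := List.sizeOf_lt_of_mem x.2; omega

/-- The height of a game: the maximal number of moves in a play from it. -/
def height : Game → ℕ
  | node l => (l.attach.map fun x => height x.1 + 1).foldr max 0
decreasing_by
  simp_wf; have := List.sizeOf_lt_of_mem x.2; omega

/-- A canonical tree: duplicate options are removed, hereditarily. -/
def Canonical : Game → Prop
  | node l => l.Nodup ∧ ∀ x : {a // a ∈ l}, Canonical x.1
decreasing_by
  simp_wf; have := List.sizeOf_lt_of_mem x.2; omega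

/-- Extensional (set-theoretic) equality of game trees. -/
def ExtEq : Game → Game → Prop
  | node l, node r =>
      (∀ x : {a // a ∈ l}, ∃ y : {b // b ∈ r}, ExtEq x.1 y.1) ∧
      (∀ y : {b // b ∈ r}, ∃ x : {a // a ∈ l}, ExtEq x.1 y.1)
termination_by g _ => sizeOf g
decreasing_by
  · have := List.sizeOf_lt_of_mem x.2; simp_wf; (try simp only [Game.node.sizeOf_spec] at *); omega
  · have := List.sizeOf_lt_of_mem x.2; simp_wf; (try simp only [Game.node.sizeOf_spec] at *); omega

/-- The disjunctive sum of `n` copies of a game. -/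
def copies : ℕ → Game → Game
  | 0, _ => node []
  | n + 1, g => add g (copies n g)

/-- `G` is a reducer of `H` if `H` is obtained from `G` by adding reversible
moves `R₁, R₂, …`: the options of `H` are those of `G` together with the `Rⱼ`,
each `Rⱼ` having `G` among its options; when `G` is empty one additionally
requires `H` to be a misère win. -/
def Reducer (G H : Game) : Prop :=
  ∃ Rs : List Game,
    (∀ x, x ∈ H.options ↔ x ∈ G.options ∨ x ∈ Rs) ∧
    (∀ R ∈ Rs, G ∈ R.options) ∧
    (G.options = [] → MisereWin H)

/-- A canonical tree is reduced if its only reducer is itself (as a set of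
options) and all of its options are reduced. -/
def Reduced : Game → Prop
  | node l =>
      (∀ G, Reducer G (node l) → ∀ x, x ∈ G.options ↔ x ∈ l) ∧
      ∀ x : {a // a ∈ l}, Reduced x.1
decreasing_by
  simp_wf; have := List.sizeOf_lt_of_mem x.2; omega

end Game


theorem two_mul_xor_one' (k : ℕ) : 2*k ^^^ 1 = 2*k+1 := by
  apply Nat.eq_of_testBit_eq; intro i
  cases i with
  | zero => simp [Nat.testBit_xor, Nat.testBit_zero]
  | succ i =>
      rw [Nat.testBit_xor, Nat.testBit_succ, Nat.testBit_succ, Nat.testBit_succ]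
      norm_num
      congr 1
      omega

theorem xor_one_eq (k : ℕ) : k ^^^ 1 = if k % 2 = 0 then k + 1 else k - 1 := by
  have hk : k = 2 * (k / 2) + k % 2 := by omega
  rcases Nat.mod_two_eq_zero_or_one k with h | h
  · rw [if_pos h]
    conv_lhs => rw [hk, h]
    rw [Nat.add_zero, two_mul_xor_one']
    omega
  · rw [if_neg (by omega)]
    conv_lhs => rw [hk, h]
    have h2 : (2 * (k / 2) + 1) ^^^ 1 = 2 * (k/2) := by
      have := two_mul_xor_one' (k / 2)
      have h3 : (2*(k/2) ^^^ 1) ^^^ 1 = 2*(k/2) := xor_cancel_right (2*(k/2)) 1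
      rw [this] at h3; exact h3
    rw [h2]; omega


namespace Game

theorem options_add (G H : Game) :
    (add G H).options = G.options.map (fun x => add x H) ++ H.options.map (fun y => add G y) := by
  cases G with | node l => cases H with | node r =>
  rw [add]
  simp [options, List.attach_map_val]

theorem win_node (l : List Game) : MisereWin (node l) ↔ l = [] ∨ ∃ x ∈ l, ¬ MisereWin x := by
  rw [MisereWin]
  simp

theorem win_node' (G : Game) : MisereWin G ↔ G.options = [] ∨ ∃ x ∈ G.options, ¬ MisereWin x := by
  cases G with | node l => rw [win_node]; rfl

theorem sizeOf_lt_of_mem_options {x G : Game} (h : x ∈ G.options) : sizeOf x < sizeOf G := by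
  cases G with | node l =>
  simp only [options] at h
  have := List.sizeOf_lt_of_mem h
  simp only [Game.node.sizeOf_spec]
  omega

theorem win_add_iff (G T : Game) : MisereWin (add G T) ↔
    (G.options = [] ∧ T.options = []) ∨ (∃ x ∈ G.options, ¬ MisereWin (add x T)) ∨
    (∃ t ∈ T.options, ¬ MisereWin (add G t)) := by
  rw [win_node' , options_add]
  simp only [List.mem_append, List.mem_map, List.append_eq_nil_iff, List.map_eq_nil_iff]
  constructor
  · rintro (⟨h1,h2⟩ | ⟨x, (⟨a,ha,rfl⟩|⟨a,ha,rfl⟩), hx⟩)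
    · exact Or.inl ⟨h1,h2⟩
    · exact Or.inr (Or.inl ⟨a, ha, hx⟩)
    · exact Or.inr (Or.inr ⟨a, ha, hx⟩)
  · rintro (⟨h1,h2⟩ | ⟨a,ha,hx⟩ | ⟨a,ha,hx⟩)
    · exact Or.inl ⟨h1,h2⟩
    · exact Or.inr ⟨_, Or.inl ⟨a, ha, rfl⟩, hx⟩
    · exact Or.inr ⟨_, Or.inr ⟨a, ha, rfl⟩, hx⟩

theorem mem_nim_options {x : Game} {n : ℕ} :
    x ∈ (nim n).options ↔ ∃ k, k < n ∧ x = nim k := by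
  induction n with
  | zero => simp [nim, options]
  | succ n ih =>
      rw [nim]
      show x ∈ (nim n).options ++ [nim n] ↔ _
      simp only [List.mem_append, List.mem_singleton, ih]
      constructor
      · rintro (⟨k, hk, rfl⟩ | rfl)
        · exact ⟨k, by omega, rfl⟩
        · exact ⟨n, by omega, rfl⟩
      · rintro ⟨k, hk, rfl⟩
        rcases Nat.lt_or_ge k n with h | h
        · exact Or.inl ⟨k, h, rfl⟩
        · have : k = n := by omega
          subst this; exact Or.inr rfl

theorem nim_mem {k n : ℕ} (h : k < n) : nim k ∈ (nim n).options :=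
  mem_nim_options.2 ⟨k, h, rfl⟩

theorem nim_options_nil {n : ℕ} : (nim n).options = [] ↔ n = 0 := by
  cases n with
  | zero => simp [nim, options]
  | succ n =>
      simp only [Nat.succ_ne_zero, iff_false]
      intro h
      have := nim_mem (Nat.lt_succ_self n)
      rw [h] at this
      exact (List.not_mem_nil this)

theorem nim_one_options : (nim 1).options = [nim 0] := by
  rw [nim]
  show (nim 0).options ++ [nim 0] = [nim 0]
  simp [nim, options]

/-- adding the empty game does not change the misère outcome of a sum -/
theorem zero_add_aux : ∀ N : ℕ, ∀ G T : Game, sizeOf G + sizeOf T ≤ N →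
    (MisereWin (add (add (node []) G) T) ↔ MisereWin (add G T)) := by
  intro N
  induction N using Nat.strong_induction_on with
  | _ N IH =>
    intro G T hN
    rw [win_add_iff, win_add_iff (G := G), options_add]
    have hopt : (node [] : Game).options = [] := rfl
    rw [hopt]
    simp only [List.map_nil, List.nil_append, List.map_eq_nil_iff, List.mem_map]
    constructor
    · rintro (⟨h1,h2⟩|⟨x,⟨a,ha,rfl⟩,hx⟩|⟨t,ht,hx⟩)
      · exact Or.inl ⟨h1,h2⟩
      · refine Or.inr (Or.inl ⟨a, ha, ?_⟩)
        rw [← IH (sizeOf a + sizeOf T)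
          (by have := sizeOf_lt_of_mem_options ha; omega) a T le_rfl]
        exact hx
      · refine Or.inr (Or.inr ⟨t, ht, ?_⟩)
        rw [← IH (sizeOf G + sizeOf t)
          (by have := sizeOf_lt_of_mem_options ht; omega) G t le_rfl]
        exact hx
    · rintro (⟨h1,h2⟩|⟨a,ha,hx⟩|⟨t,ht,hx⟩)
      · exact Or.inl ⟨h1,h2⟩
      · refine Or.inr (Or.inl ⟨_, ⟨a, ha, rfl⟩, ?_⟩)
        rw [IH (sizeOf a + sizeOf T)
          (by have := sizeOf_lt_of_mem_options ha; omega) a T le_rfl]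
        exact hx
      · refine Or.inr (Or.inr ⟨t, ht, ?_⟩)
        rw [IH (sizeOf G + sizeOf t)
          (by have := sizeOf_lt_of_mem_options ht; omega) G t le_rfl]
        exact hx

theorem zero_add_win (G T : Game) :
    MisereWin (add (add (node []) G) T) ↔ MisereWin (add G T) :=
  zero_add_aux _ G T le_rfl

/-- commutativity of `add` up to misère outcome of a sum -/
theorem comm_aux : ∀ N : ℕ, ∀ G H T : Game, sizeOf G + sizeOf H + sizeOf T ≤ N →
    (MisereWin (add (add G H) T) ↔ MisereWin (add (add H G) T)) := by
  intro N
  induction N using Nat.strong_induction_on with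
  | _ N IH =>
    intro G H T hN
    rw [win_add_iff, win_add_iff (G := add H G), options_add, options_add (G := H)]
    simp only [List.mem_append, List.mem_map, List.append_eq_nil_iff, List.map_eq_nil_iff]
    have swap1 : ∀ a ∈ G.options, ∀ t : Game, sizeOf t ≤ sizeOf T →
        (MisereWin (add (add a H) t) ↔ MisereWin (add (add H a) t)) := fun a ha t htle =>
      IH (sizeOf a + sizeOf H + sizeOf t)
        (by have := sizeOf_lt_of_mem_options ha; omega) a H t le_rfl
    have swap2 : ∀ b ∈ H.options, ∀ t : Game, sizeOf t ≤ sizeOf T →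
        (MisereWin (add (add G b) t) ↔ MisereWin (add (add b G) t)) := fun b hb t htle =>
      IH (sizeOf G + sizeOf b + sizeOf t)
        (by have := sizeOf_lt_of_mem_options hb; omega) G b t le_rfl
    constructor
    · rintro (⟨⟨h1,h2⟩,h3⟩ | ⟨x, (⟨a,ha,rfl⟩|⟨b,hb,rfl⟩), hx⟩ | ⟨t,ht,hx⟩)
      · exact Or.inl ⟨⟨h2,h1⟩,h3⟩
      · exact Or.inr (Or.inl ⟨_, Or.inr ⟨a, ha, rfl⟩, by rwa [← swap1 a ha T le_rfl]⟩)
      · exact Or.inr (Or.inl ⟨_, Or.inl ⟨b, hb, rfl⟩, by rwa [← swap2 b hb T le_rfl]⟩)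
      · refine Or.inr (Or.inr ⟨t, ht, ?_⟩)
        rw [← IH (sizeOf G + sizeOf H + sizeOf t)
          (by have := sizeOf_lt_of_mem_options ht; omega) G H t le_rfl]
        exact hx
    · rintro (⟨⟨h1,h2⟩,h3⟩ | ⟨x, (⟨b,hb,rfl⟩|⟨a,ha,rfl⟩), hx⟩ | ⟨t,ht,hx⟩)
      · exact Or.inl ⟨⟨h2,h1⟩,h3⟩
      · exact Or.inr (Or.inl ⟨_, Or.inr ⟨b, hb, rfl⟩, by rwa [swap2 b hb T le_rfl]⟩)
      · exact Or.inr (Or.inl ⟨_, Or.inl ⟨a, ha, rfl⟩, by rwa [swap1 a ha T le_rfl]⟩)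
      · refine Or.inr (Or.inr ⟨t, ht, ?_⟩)
        rw [IH (sizeOf G + sizeOf H + sizeOf t)
          (by have := sizeOf_lt_of_mem_options ht; omega) G H t le_rfl]
        exact hx

theorem comm_win (G H T : Game) :
    MisereWin (add (add G H) T) ↔ MisereWin (add (add H G) T) :=
  comm_aux _ G H T le_rfl


theorem nim_zero : nim 0 = node [] := by rw [nim]

theorem key_aux : ∀ N : ℕ, ∀ n : ℕ, ∀ T : Game, n + sizeOf T ≤ N →
    (MisereWin (add (add (nim 1) (nim n)) T) ↔ MisereWin (add (nim (n ^^^ 1)) T)) := by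
  intro N
  induction N using Nat.strong_induction_on with
  | _ N IH =>
    intro n T hN
    have IHk : ∀ k, k < n →
        (MisereWin (add (add (nim 1) (nim k)) T) ↔ MisereWin (add (nim (k ^^^ 1)) T)) :=
      fun k hk => IH (k + sizeOf T) (by omega) k T le_rfl
    have IHt : ∀ t ∈ T.options,
        (MisereWin (add (add (nim 1) (nim n)) t) ↔ MisereWin (add (nim (n ^^^ 1)) t)) :=
      fun t ht => IH (n + sizeOf t) (by have := sizeOf_lt_of_mem_options ht; omega) n t le_rfl
    -- characterize the left-hand side
    have hL : MisereWin (add (add (nim 1) (nim n)) T) ↔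
        (¬ MisereWin (add (nim n) T) ∨
         (∃ k, k < n ∧ ¬ MisereWin (add (nim (k ^^^ 1)) T)) ∨
         (∃ t ∈ T.options, ¬ MisereWin (add (nim (n ^^^ 1)) t))) := by
      rw [win_add_iff, options_add, nim_one_options]
      constructor
      · rintro (⟨h1, _⟩ | ⟨x, hx, hlx⟩ | ⟨t, ht, hlt⟩)
        · simp at h1
        · simp only [List.mem_append, List.mem_map, List.mem_singleton] at hx
          rcases hx with ⟨a, rfl, rfl⟩ | ⟨a, ha, rfl⟩
          · left
            rw [nim_zero, zero_add_win] at hlx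
            exact hlx
          · obtain ⟨k, hk, rfl⟩ := mem_nim_options.1 ha
            exact Or.inr (Or.inl ⟨k, hk, by rwa [← IHk k hk]⟩)
        · exact Or.inr (Or.inr ⟨t, ht, by rwa [← IHt t ht]⟩)
      · rintro (h | ⟨k, hk, h⟩ | ⟨t, ht, h⟩)
        · refine Or.inr (Or.inl ⟨add (nim 0) (nim n), by simp, ?_⟩)
          rw [nim_zero, zero_add_win]
          exact h
        · refine Or.inr (Or.inl ⟨add (nim 1) (nim k), ?_, by rwa [IHk k hk]⟩)
          simp only [List.mem_append, List.mem_map]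
          exact Or.inr ⟨nim k, nim_mem hk, rfl⟩
        · exact Or.inr (Or.inr ⟨t, ht, by rwa [IHt t ht]⟩)
    rw [hL]
    rcases Nat.mod_two_eq_zero_or_one n with hpar | hpar
    · -- n even : n ^^^ 1 = n + 1
      have hq : n ^^^ 1 = n + 1 := by rw [xor_one_eq, if_pos hpar]
      rw [hq]
      rw [win_add_iff (G := nim (n+1))]
      constructor
      · rintro (h | ⟨k, hk, h⟩ | ⟨t, ht, h⟩)
        · exact Or.inr (Or.inl ⟨nim n, nim_mem (Nat.lt_succ_self n), h⟩)
        · have hlt : k ^^^ 1 < n + 1 := by rw [xor_one_eq]; split_ifs <;> omega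
          exact Or.inr (Or.inl ⟨nim (k ^^^ 1), nim_mem hlt, h⟩)
        · exact Or.inr (Or.inr ⟨t, ht, h⟩)
      · rintro (⟨h1, _⟩ | ⟨x, hx, h⟩ | ⟨t, ht, h⟩)
        · exact absurd (nim_options_nil.1 h1) (by omega)
        · obtain ⟨j, hj, rfl⟩ := mem_nim_options.1 hx
          rcases Nat.lt_or_ge j n with hjn | hjn
          · refine Or.inr (Or.inl ⟨j ^^^ 1, ?_, ?_⟩)
            · rw [xor_one_eq]; split_ifs with h2 <;> omega
            · rwa [xor_cancel_right]
          · have : j = n := by omega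
            subst this
            exact Or.inl h
        · exact Or.inr (Or.inr ⟨t, ht, h⟩)
    · -- n odd : n ^^^ 1 = n - 1
      have hq : n ^^^ 1 = n - 1 := by rw [xor_one_eq, if_neg (by omega)]
      rw [hq]
      constructor
      · rintro (h | ⟨k, hk, h⟩ | ⟨t, ht, h⟩)
        · rw [win_add_iff] at h
          push_neg at h
          exact h.2.1 (nim (n-1)) (nim_mem (by omega))
        · by_cases hkn : k = n - 1
          · have hx : k ^^^ 1 = n := by rw [xor_one_eq]; split_ifs <;> omega
            rw [hx, win_add_iff] at h
            push_neg at h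
            exact h.2.1 (nim (n-1)) (nim_mem (by omega))
          · have hlt : k ^^^ 1 < n - 1 := by rw [xor_one_eq]; split_ifs <;> omega
            rw [win_add_iff]
            exact Or.inr (Or.inl ⟨nim (k ^^^ 1), nim_mem hlt, h⟩)
        · rw [win_add_iff]
          exact Or.inr (Or.inr ⟨t, ht, h⟩)
      · intro hw
        rw [win_add_iff] at hw
        rcases hw with ⟨h1, h2⟩ | ⟨x, hx, h⟩ | ⟨t, ht, h⟩
        · have hn1 : n = 1 := by have := nim_options_nil.1 h1; omega
          subst hn1
          left
          have h0 : MisereWin (add (nim 0) T) :=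
            (win_add_iff _ _).2 (Or.inl ⟨nim_options_nil.2 rfl, h2⟩)
          rw [win_add_iff]
          rintro (⟨ha, _⟩ | ⟨x, hx, hl⟩ | ⟨t, ht, _⟩)
          · rw [nim_one_options] at ha; simp at ha
          · rw [nim_one_options] at hx
            simp only [List.mem_singleton] at hx
            subst hx
            exact hl h0
          · rw [h2] at ht; exact List.not_mem_nil ht
        · obtain ⟨j, hj, rfl⟩ := mem_nim_options.1 hx
          refine Or.inr (Or.inl ⟨j ^^^ 1, ?_, ?_⟩)
          · rw [xor_one_eq]; split_ifs <;> omega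
          · rwa [xor_cancel_right]
        · exact Or.inr (Or.inr ⟨t, ht, h⟩)


end Game

open Game in
/-- If at least one of `m`, `n` is `0` or `1`, then
`nim m + nim n` is misère-indistinguishable from `nim (m XOR n)`. -/
theorem stmt3 (m n : ℕ) (h : m = 0 ∨ m = 1 ∨ n = 0 ∨ n = 1) :
    Indist (add (nim m) (nim n)) (nim (m ^^^ n)) := by
  rcases h with rfl | rfl | rfl | rfl
  · intro T
    rw [Nat.zero_xor, show nim 0 = node [] from nim_zero]
    exact zero_add_win (nim n) T
  · intro T
    rw [Nat.xor_comm]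
    exact key_aux _ n T le_rfl
  · intro T
    rw [Nat.xor_zero, comm_win, show nim 0 = node [] from nim_zero]
    exact zero_add_win (nim m) T
  · intro T
    rw [comm_win]
    exact key_aux _ m T le_rfl
end

section
/- For all natural numbers a ≥ 1 and b, the disjunctive sum of (a + 2) copies of nim 2 and b copies of nim 1 has the same misère outcome (win or loss for the player to move) as the disjunctive sum of a copies of nim 2 and b copies of nim 1. In other words, in misère Nim restricted to heaps of size at most 2, when a position contains at least 3 copies of *2, deleting a pair of *2 does not change its outcome; in particular *2 and *2 + *2 + *2 are indistinguishable within this restricted game. -/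
namespace Game

lemma options_add_s11 (l r : List Game) : (add (node l) (node r)).options =
    (l.attach.map fun x => add x.1 (node r)) ++ (r.attach.map fun y => add (node l) y.1) := by
  rw [add]; rfl

lemma mem_options_add {x : Game} (G H : Game) :
    x ∈ (add G H).options ↔ (∃ g ∈ G.options, x = add g H) ∨ (∃ h ∈ H.options, x = add G h) := by
  obtain ⟨l⟩ := G; obtain ⟨r⟩ := H
  rw [options_add_s11]
  simp [options, eq_comm]

lemma misereWin_iff (G : Game) :
    MisereWin G ↔ (G.options = [] ∨ ∃ x ∈ G.options, ¬ MisereWin x) := by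
  obtain ⟨l⟩ := G
  rw [MisereWin]; simp [options]

lemma nim1_eq : nim 1 = node [nim 0] := by simp [nim, options]
lemma nim2_eq : nim 2 = node [nim 0, nim 1] := by simp [nim, options, nim1_eq]

/-- `Repr G a b` : `G` is a sum-tree consisting of `a` heaps of size 2 and
`b` heaps of size 1 (and possibly empty heaps). -/
inductive Repr : Game → ℕ → ℕ → Prop
  | nim0 : Repr (nim 0) 0 0
  | nim1 : Repr (nim 1) 0 1
  | nim2 : Repr (nim 2) 1 0
  | add {G H a b c d} : Repr G a b → Repr H c d → Repr (add G H) (a + c) (b + d)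

/-- The legal count changes in a single move. -/
def Move (a b a' b' : ℕ) : Prop :=
  (a = a' + 1 ∧ b' = b) ∨ (a = a' + 1 ∧ b' = b + 1) ∨ (a' = a ∧ b = b' + 1)

lemma repr_options {G a b} (h : Repr G a b) :
    ∀ x ∈ G.options, ∃ a' b', Repr x a' b' ∧ Move a b a' b' := by
  induction h with
  | nim0 => intro x hx; simp [nim, options] at hx
  | nim1 => intro x hx
            simp [nim1_eq, options] at hx
            exact ⟨0, 0, hx ▸ Repr.nim0, Or.inr (Or.inr ⟨rfl, rfl⟩)⟩
  | nim2 => intro x hx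
            simp [nim2_eq, options] at hx
            rcases hx with rfl | rfl
            · exact ⟨0, 0, Repr.nim0, Or.inl ⟨rfl, rfl⟩⟩
            · exact ⟨0, 1, Repr.nim1, Or.inr (Or.inl ⟨rfl, rfl⟩)⟩
  | @add G H a b c d hG hH ihG ihH =>
      intro x hx
      rw [mem_options_add] at hx
      rcases hx with ⟨g, hg, rfl⟩ | ⟨h', hh, rfl⟩
      · obtain ⟨a', b', hr, hm⟩ := ihG g hg
        exact ⟨a' + c, b' + d, Repr.add hr hH, by unfold Move at *; omega⟩
      · obtain ⟨c', d', hr, hm⟩ := ihH h' hh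
        exact ⟨a + c', b + d', Repr.add hG hr, by unfold Move at *; omega⟩

lemma repr_move {G a b} (h : Repr G a b) :
    ∀ a' b', Move a b a' b' → ∃ x ∈ G.options, Repr x a' b' := by
  induction h with
  | nim0 => intro a' b' hm; unfold Move at hm; omega
  | nim1 => intro a' b' hm
            have : a' = 0 ∧ b' = 0 := by unfold Move at hm; omega
            obtain ⟨rfl, rfl⟩ := this
            exact ⟨nim 0, by simp [nim1_eq, options], Repr.nim0⟩
  | nim2 => intro a' b' hm
            have : a' = 0 ∧ (b' = 0 ∨ b' = 1) := by unfold Move at hm; omega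
            obtain ⟨rfl, rfl | rfl⟩ := this
            · exact ⟨nim 0, by simp [nim2_eq, options], Repr.nim0⟩
            · exact ⟨nim 1, by simp [nim2_eq, options], Repr.nim1⟩
  | @add G H a b c d hG hH ihG ihH =>
      intro a' b' hm
      rcases hm with ⟨ha, rfl⟩ | ⟨ha, rfl⟩ | ⟨rfl, hb⟩
      · -- remove a 2-heap
        rcases Nat.eq_zero_or_pos a with rfl | hpos
        · obtain ⟨x, hx, hr⟩ := ihH (c - 1) d (Or.inl ⟨by omega, rfl⟩)
          refine ⟨add G x, ?_, ?_⟩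
          · rw [mem_options_add]; exact Or.inr ⟨x, hx, rfl⟩
          · have : a' = 0 + (c - 1) := by omega
            rw [this]; exact Repr.add hG hr
        · obtain ⟨x, hx, hr⟩ := ihG (a - 1) b (Or.inl ⟨by omega, rfl⟩)
          refine ⟨add x H, ?_, ?_⟩
          · rw [mem_options_add]; exact Or.inl ⟨x, hx, rfl⟩
          · have : a' = (a - 1) + c := by omega
            rw [this]; exact Repr.add hr hH
      · -- turn a 2-heap into a 1-heap
        rcases Nat.eq_zero_or_pos a with rfl | hpos
        · obtain ⟨x, hx, hr⟩ := ihH (c - 1) (d + 1) (Or.inr (Or.inl ⟨by omega, rfl⟩))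
          refine ⟨add G x, ?_, ?_⟩
          · rw [mem_options_add]; exact Or.inr ⟨x, hx, rfl⟩
          · have h1 : a' = 0 + (c - 1) := by omega
            have h2 : b + d + 1 = b + (d + 1) := by omega
            rw [h1, h2]; exact Repr.add hG hr
        · obtain ⟨x, hx, hr⟩ := ihG (a - 1) (b + 1) (Or.inr (Or.inl ⟨by omega, rfl⟩))
          refine ⟨add x H, ?_, ?_⟩
          · rw [mem_options_add]; exact Or.inl ⟨x, hx, rfl⟩
          · have h1 : a' = (a - 1) + c := by omega
            have h2 : b + d + 1 = (b + 1) + d := by omega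
            rw [h1, h2]; exact Repr.add hr hH
      · -- remove a 1-heap
        rcases Nat.eq_zero_or_pos b with rfl | hpos
        · obtain ⟨x, hx, hr⟩ := ihH c (d - 1) (Or.inr (Or.inr ⟨rfl, by omega⟩))
          refine ⟨add G x, ?_, ?_⟩
          · rw [mem_options_add]; exact Or.inr ⟨x, hx, rfl⟩
          · have : b' = 0 + (d - 1) := by omega
            rw [this]; exact Repr.add hG hr
        · obtain ⟨x, hx, hr⟩ := ihG a (b - 1) (Or.inr (Or.inr ⟨rfl, by omega⟩))
          refine ⟨add x H, ?_, ?_⟩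
          · rw [mem_options_add]; exact Or.inl ⟨x, hx, rfl⟩
          · have : b' = (b - 1) + d := by omega
            rw [this]; exact Repr.add hr hH

lemma repr_zero_options' {G a b} (h : Repr G a b) : a = 0 → b = 0 → G.options = [] := by
  induction h with
  | nim0 => intro _ _; simp [nim, options]
  | nim1 => omega
  | nim2 => omega
  | @add G H a b c d hG hH ihG ihH =>
      intro ha hb
      have ha' : a = 0 ∧ c = 0 := by omega
      have hb' : b = 0 ∧ d = 0 := by omega
      have h1 := ihG ha'.1 hb'.1
      have h2 := ihH ha'.2 hb'.2
      obtain ⟨l⟩ := G; obtain ⟨r⟩ := H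
      simp [options] at h1 h2
      subst h1; subst h2
      rw [options_add_s11]; simp

lemma repr_zero_options {G} (h : Repr G 0 0) : G.options = [] :=
  repr_zero_options' h rfl rfl

/-- The misère-Nim outcome formula for positions with heaps of size ≤ 2. -/
def W (a b : ℕ) : Prop :=
  (a = 0 ∧ b % 2 = 0) ∨ (a ≠ 0 ∧ (a % 2 = 1 ∨ b % 2 = 1))

lemma w_step_forward (a b : ℕ) (hab : 1 ≤ a + b) (hw : W a b) :
    ∃ a' b', Move a b a' b' ∧ ¬ W a' b' := by
  unfold W Move at *
  rcases Nat.eq_zero_or_pos a with rfl | hpos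
  · -- a = 0, b even, b ≥ 1 : take a 1-heap
    exact ⟨0, b - 1, by omega, by omega⟩
  · rcases Nat.eq_zero_or_pos (a % 2) with he | ho
    · -- a even positive, so b must be odd: take a 1-heap
      exact ⟨a, b - 1, by omega, by omega⟩
    · -- a odd
      rcases Nat.lt_or_ge a 2 with h1 | h2
      · -- a = 1
        rcases Nat.eq_zero_or_pos (b % 2) with hbe | hbo
        · exact ⟨0, b + 1, by omega, by omega⟩
        · exact ⟨0, b, by omega, by omega⟩
      · -- a ≥ 3 odd
        rcases Nat.eq_zero_or_pos (b % 2) with hbe | hbo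
        · exact ⟨a - 1, b, by omega, by omega⟩
        · exact ⟨a - 1, b + 1, by omega, by omega⟩

lemma w_step_backward (a b a' b' : ℕ) (hm : Move a b a' b') (hw : ¬ W a' b') : W a b := by
  unfold W Move at *; omega

lemma outcome : ∀ n G a b, 2 * a + b ≤ n → Repr G a b → (MisereWin G ↔ W a b) := by
  intro n
  induction n with
  | zero =>
      intro G a b hn h
      have ha : a = 0 := by omega
      have hb : b = 0 := by omega
      subst ha; subst hb
      rw [misereWin_iff, repr_zero_options h]
      simp [W]
  | succ n ih =>
      intro G a b hn h
      rcases Nat.eq_zero_or_pos (a + b) with h0 | hpos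
      · have ha : a = 0 := by omega
        have hb : b = 0 := by omega
        subst ha; subst hb
        rw [misereWin_iff, repr_zero_options h]
        simp [W]
      · rw [misereWin_iff]
        constructor
        · rintro (hemp | ⟨x, hx, hloss⟩)
          · -- impossible: there is a move
            exfalso
            have : ∃ a' b', Move a b a' b' := by
              rcases Nat.eq_zero_or_pos a with rfl | hA
              · exact ⟨0, b - 1, Or.inr (Or.inr ⟨rfl, by omega⟩)⟩
              · exact ⟨a - 1, b, Or.inl ⟨by omega, rfl⟩⟩
            obtain ⟨a', b', hm⟩ := this
            obtain ⟨x, hx, -⟩ := repr_move h a' b' hm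
            rw [hemp] at hx; simp at hx
          · obtain ⟨a', b', hr, hm⟩ := repr_options h x hx
            have hlt : 2 * a' + b' ≤ n := by unfold Move at hm; omega
            have := (ih x a' b' hlt hr).not.mp hloss
            exact w_step_backward a b a' b' hm this
        · intro hw
          obtain ⟨a', b', hm, hw'⟩ := w_step_forward a b hpos hw
          obtain ⟨x, hx, hr⟩ := repr_move h a' b' hm
          have hlt : 2 * a' + b' ≤ n := by unfold Move at hm; omega
          exact Or.inr ⟨x, hx, (ih x a' b' hlt hr).not.mpr hw'⟩

lemma repr_copies_nim2 (n : ℕ) : Repr (copies n (nim 2)) n 0 := by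
  induction n with
  | zero => exact Repr.nim0
  | succ n ih =>
      have := Repr.add Repr.nim2 ih
      simpa [copies, Nat.add_comm] using this

lemma repr_copies_nim1 (n : ℕ) : Repr (copies n (nim 1)) 0 n := by
  induction n with
  | zero => exact Repr.nim0
  | succ n ih =>
      have := Repr.add Repr.nim1 ih
      simpa [copies, Nat.add_comm] using this

end Game

open Game in
/-- For `a ≥ 1`, the sum of `a + 2` copies of `nim 2` and `b`
copies of `nim 1` has the same misère outcome as the sum of `a` copies of
`nim 2` and `b` copies of `nim 1`: deleting a pair of `*2` from a position
containing at least 3 copies of `*2` does not change the outcome. -/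
theorem stmt11 (a b : ℕ) (ha : 1 ≤ a) :
    (MisereWin (add (copies (a + 2) (nim 2)) (copies b (nim 1))) ↔
     MisereWin (add (copies a (nim 2)) (copies b (nim 1)))) := by
  have h1 : Repr (add (copies (a + 2) (nim 2)) (copies b (nim 1))) (a + 2) b := by
    have := Repr.add (repr_copies_nim2 (a + 2)) (repr_copies_nim1 b)
    simpa using this
  have h2 : Repr (add (copies a (nim 2)) (copies b (nim 1))) a b := by
    have := Repr.add (repr_copies_nim2 a) (repr_copies_nim1 b)
    simpa using this
  rw [outcome (2 * (a + 2) + b) _ _ _ le_rfl h1, outcome (2 * a + b) _ _ _ le_rfl h2]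
  unfold W
  omega
end
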